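/- Consider the partially linear model Y = α + βX + g(S) + ε and exposure model X = h(S) + δ, with g, h measurable fixed functions and ε, δ independent mean-zero errors independent of S and of each other. Define U = (g(S), h(S)). Then U is a measurable function of S, and the potential outcome Y(x) = α + βx + g(S) + ε satisfies Y(x) ⊥ X | U. -/

import Mathlib

open MeasureTheory ProbabilityTheory

open MeasurableSpace in
/-- If `mE, mD` are independent σ-algebras and `mE ⊔ mD` is independent of `m'`, then
`m' ⊔ mE` and `m' ⊔ mD` are conditionally independent given `m'`. -/
lemma aux_condIndep_sup {Ω : Type*} {m' mE mD : MeasurableSpace Ω}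
    [mΩ : MeasurableSpace Ω] [StandardBorelSpace Ω]
    (μ : Measure Ω) [IsProbabilityMeasure μ]
    (hm' : m' ≤ mΩ) (hmE : mE ≤ mΩ) (hmD : mD ≤ mΩ)
    (hED : Indep mE mD μ)
    (hSm' : Indep (mE ⊔ mD) m' μ) :
    CondIndep m' (m' ⊔ mE) (m' ⊔ mD) hm' μ := by
  classical
  set p1 : Set (Set Ω) :=
    {s | ∃ c a, MeasurableSet[m'] c ∧ MeasurableSet[mE] a ∧ s = c ∩ a} with hp1def
  set p2 : Set (Set Ω) :=
    {s | ∃ c a, MeasurableSet[m'] c ∧ MeasurableSet[mD] a ∧ s = c ∩ a} with hp2def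
  -- generation facts
  have hgen : ∀ m₁ : MeasurableSpace Ω, m₁ ≤ mΩ →
      m' ⊔ m₁ = generateFrom
        {s | ∃ c a, MeasurableSet[m'] c ∧ MeasurableSet[m₁] a ∧ s = c ∩ a} := by
    intro m₁ _
    refine le_antisymm (sup_le ?_ ?_) (generateFrom_le ?_)
    · intro s hs
      exact measurableSet_generateFrom ⟨s, Set.univ, hs, MeasurableSet.univ,
        (Set.inter_univ s).symm⟩
    · intro s hs
      exact measurableSet_generateFrom ⟨Set.univ, s, MeasurableSet.univ, hs,
        (Set.univ_inter s).symm⟩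
    · rintro s ⟨c, a, hc, ha, rfl⟩
      exact ((le_sup_left : m' ≤ m' ⊔ m₁) _ hc).inter
        ((le_sup_right : m₁ ≤ m' ⊔ m₁) _ ha)
  have hpi : ∀ m₁ : MeasurableSpace Ω,
      IsPiSystem {s | ∃ c a, MeasurableSet[m'] c ∧ MeasurableSet[m₁] a ∧ s = c ∩ a} := by
    rintro m₁ s ⟨c1, a1, hc1, ha1, rfl⟩ t ⟨c2, a2, hc2, ha2, rfl⟩ -
    exact ⟨c1 ∩ c2, a1 ∩ a2, hc1.inter hc2, ha1.inter ha2,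
      Set.inter_inter_inter_comm c1 a1 c2 a2⟩
  have hmeas1 : ∀ s ∈ p1, MeasurableSet[mΩ] s := by
    rintro s ⟨c, a, hc, ha, rfl⟩; exact (hm' _ hc).inter (hmE _ ha)
  have hmeas2 : ∀ s ∈ p2, MeasurableSet[mΩ] s := by
    rintro s ⟨c, a, hc, ha, rfl⟩; exact (hm' _ hc).inter (hmD _ ha)
  -- conditional expectation computations
  have key : ∀ c e : Set Ω, MeasurableSet[m'] c → MeasurableSet[mΩ] e →
      (μ⟦c ∩ e | m'⟧) =ᵐ[μ] c.indicator (μ⟦e | m'⟧) := by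
    intro c e hc he
    have hind : (Set.indicator (c ∩ e) fun _ => (1 : ℝ))
        = c.indicator (Set.indicator e fun _ => (1 : ℝ)) :=
      (Set.indicator_indicator _ _ _).symm
    rw [hind]
    exact condExp_indicator ((integrable_const (1 : ℝ)).indicator he) hc
  have keyE : ∀ e : Set Ω, MeasurableSet[mE ⊔ mD] e →
      (μ⟦e | m'⟧) =ᵐ[μ] fun _ => (μ e).toReal := by
    intro e he
    have hsm : StronglyMeasurable[mE ⊔ mD] (Set.indicator e fun _ => (1 : ℝ)) :=
      stronglyMeasurable_const.indicator he
    have := condExp_indep_eq (μ := μ) (f := Set.indicator e fun _ => (1 : ℝ))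
      (sup_le hmE hmD) hm' hsm hSm'
    have hint : ∫ ω, Set.indicator e (fun _ => (1 : ℝ)) ω ∂μ = (μ e).toReal :=
      integral_indicator_one ((sup_le hmE hmD) _ he)
    rw [hint] at this
    exact this
  rw [Indep_iff] at hED
  -- the π-systems are conditionally independent
  have hps : CondIndepSets m' hm' p1 p2 μ := by
    rw [condIndepSets_iff m' hm' p1 p2 hmeas1 hmeas2 μ]
    rintro t1 t2 ⟨c1, a, hc1, ha, rfl⟩ ⟨c2, bset, hc2, hb, rfl⟩
    have hset : (c1 ∩ a) ∩ (c2 ∩ bset) = (c1 ∩ c2) ∩ (a ∩ bset) :=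
      Set.inter_inter_inter_comm c1 a c2 bset
    have haE : MeasurableSet[mE ⊔ mD] a := (le_sup_left : mE ≤ mE ⊔ mD) _ ha
    have hbE : MeasurableSet[mE ⊔ mD] bset := (le_sup_right : mD ≤ mE ⊔ mD) _ hb
    have h1 := key (c1 ∩ c2) (a ∩ bset) (hc1.inter hc2)
      ((hmE _ ha).inter (hmD _ hb))
    have h2 := keyE (a ∩ bset) (haE.inter hbE)
    have h3 := key c1 a hc1 (hmE _ ha)
    have h4 := keyE a haE
    have h5 := key c2 bset hc2 (hmD _ hb)
    have h6 := keyE bset hbE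
    have hμab : μ (a ∩ bset) = μ a * μ bset := hED a bset ha hb
    rw [hset]
    filter_upwards [h1, h3, h5, h2, h4, h6] with ω e1 e3 e5 e2 e4 e6
    rw [e1, Pi.mul_apply, e3, e5]
    by_cases hω1 : ω ∈ c1 <;> by_cases hω2 : ω ∈ c2 <;>
      simp [Set.indicator_apply, hω1, hω2, e2, e4, e6, hμab, ENNReal.toReal_mul]
  -- conclude via the π-system lemma at the kernel level
  exact Kernel.IndepSets.indep (sup_le hm' hmE) (sup_le hm' hmD) (hpi mE) (hpi mD)
    (hgen mE hmE) (hgen mD hmD) hps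

/-- In the partially linear model `Y = α + βX + g(S) + ε`, `X = h(S) + δ`, with
`ε, δ` mean-zero errors independent of each other and of `S`, and `U = (g(S), h(S))`,
the confounder `U` is a measurable function of `S` and the potential outcome
`Y(x) = α + βx + g(S) + ε` satisfies `Y(x) ⟂ X | U`. -/
theorem plm_identification
    {Ω β : Type*} [MeasurableSpace Ω] [StandardBorelSpace Ω] [MeasurableSpace β]
    (μ : Measure Ω) [IsProbabilityMeasure μ]
    (S : Ω → β) (hS : Measurable S)
    (g h : β → ℝ) (hg : Measurable g) (hh : Measurable h)
    (eps del : Ω → ℝ) (heps : Measurable eps) (hdel : Measurable del)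
    (heps_mean : ∫ ω, eps ω ∂μ = 0) (hdel_mean : ∫ ω, del ω ∂μ = 0)
    (h_indep_errors : IndepFun eps del μ)
    (h_indep_S : IndepFun (fun ω => (eps ω, del ω)) S μ)
    (α b : ℝ)
    (X : Ω → ℝ) (hX : X = fun ω => h (S ω) + del ω)
    (Y : ℝ → Ω → ℝ) (hY : ∀ x, Y x = fun ω => α + b * x + g (S ω) + eps ω)
    (U : Ω → ℝ × ℝ) (hU : U = fun ω => (g (S ω), h (S ω)))
    (hmU : MeasurableSpace.comap U inferInstance ≤ ‹MeasurableSpace Ω›) :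
    (∃ k : β → ℝ × ℝ, Measurable k ∧ U = fun ω => k (S ω)) ∧
      ∀ x : ℝ, CondIndepFun (MeasurableSpace.comap U inferInstance) hmU (Y x) X μ := by
  constructor
  · exact ⟨fun s => (g s, h s), (hg.prodMk hh), hU⟩
  intro x
  have hmE : MeasurableSpace.comap eps inferInstance ≤ ‹MeasurableSpace Ω› := heps.comap_le
  have hmD : MeasurableSpace.comap del inferInstance ≤ ‹MeasurableSpace Ω› := hdel.comap_le
  have hED : Indep (MeasurableSpace.comap eps inferInstance)
      (MeasurableSpace.comap del inferInstance) μ := h_indep_errors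
  have hsup_le : MeasurableSpace.comap eps inferInstance ⊔ MeasurableSpace.comap del inferInstance
      ≤ MeasurableSpace.comap (fun ω => (eps ω, del ω)) inferInstance := by
    refine sup_le ?_ ?_
    · have h1 : eps = Prod.fst ∘ (fun ω => (eps ω, del ω)) := rfl
      conv_lhs => rw [h1, ← MeasurableSpace.comap_comp]
      exact MeasurableSpace.comap_mono measurable_fst.comap_le
    · have h1 : del = Prod.snd ∘ (fun ω => (eps ω, del ω)) := rfl
      conv_lhs => rw [h1, ← MeasurableSpace.comap_comp]
      exact MeasurableSpace.comap_mono measurable_snd.comap_le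
  have hm'_le_S : MeasurableSpace.comap U inferInstance
      ≤ MeasurableSpace.comap S inferInstance := by
    have h1 : U = (fun s => (g s, h s)) ∘ S := hU
    rw [h1, ← MeasurableSpace.comap_comp]
    exact MeasurableSpace.comap_mono (hg.prodMk hh).comap_le
  have hSm' : Indep
      (MeasurableSpace.comap eps inferInstance ⊔ MeasurableSpace.comap del inferInstance)
      (MeasurableSpace.comap U inferInstance) μ := by
    have hbase : Indep (MeasurableSpace.comap (fun ω => (eps ω, del ω)) inferInstance)
        (MeasurableSpace.comap S inferInstance) μ := h_indep_S
    exact indep_of_indep_of_le_right (indep_of_indep_of_le_left hbase hsup_le) hm'_le_S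
  have hCI : CondIndep (MeasurableSpace.comap U inferInstance)
      (MeasurableSpace.comap U inferInstance ⊔ MeasurableSpace.comap eps inferInstance)
      (MeasurableSpace.comap U inferInstance ⊔ MeasurableSpace.comap del inferInstance)
      hmU μ :=
    aux_condIndep_sup μ hmU hmE hmD hED hSm'
  have hgS : Measurable[MeasurableSpace.comap U inferInstance] fun ω => g (S ω) := by
    have h1 : (fun ω => g (S ω)) = Prod.fst ∘ U := by rw [hU]; rfl
    rw [h1]
    exact Measurable.comp measurable_fst (comap_measurable U)
  have hhS : Measurable[MeasurableSpace.comap U inferInstance] fun ω => h (S ω) := by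
    have h1 : (fun ω => h (S ω)) = Prod.snd ∘ U := by rw [hU]; rfl
    rw [h1]
    exact Measurable.comp measurable_snd (comap_measurable U)
  have hYm : @Measurable Ω ℝ
      (MeasurableSpace.comap U inferInstance ⊔ MeasurableSpace.comap eps inferInstance)
      _ (Y x) := by
    rw [hY x]
    refine Measurable.add ?_ ?_
    · exact measurable_const.add (hgS.mono le_sup_left le_rfl)
    · exact (comap_measurable eps).mono le_sup_right le_rfl
  have hXm : @Measurable Ω ℝ
      (MeasurableSpace.comap U inferInstance ⊔ MeasurableSpace.comap del inferInstance)
      _ X := by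
    rw [hX]
    refine Measurable.add ?_ ?_
    · exact hhS.mono le_sup_left le_rfl
    · exact (comap_measurable del).mono le_sup_right le_rfl
  rw [condIndepFun_iff_condIndep]
  exact condIndep_of_condIndep_of_le_right
    (condIndep_of_condIndep_of_le_left hCI hYm.comap_le) hXm.comap_le
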